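/- For all x, y ∈ U^ev, the element Σ ad_{S(R₁)}(y) ⊗ ad_{R₂}(x) of U_ζ ⊗ U_ζ — that is, the image of the R-matrix R = Σ R₁ ⊗ R₂ under the ℂ-linear map determined by a⊗b ↦ ad_{S(a)}(y) ⊗ ad_b(x) — lies in U^ev ⊗ U^ev. -/

import Mathlib

open scoped TensorProduct

noncomputable section
namespace RestrictedQsl2

inductive Gen : Type | E | F | K | Kinv

abbrev FA : Type := FreeAlgebra ℂ Gen

/-- `t = exp(πi/ℓ)`. -/
def tval (ℓ : ℕ) : ℂ := Complex.exp (Real.pi * Complex.I / ℓ)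

/-- `s = exp(πi/(2ℓ))`, so `s² = t`. -/
def sval (ℓ : ℕ) : ℂ := Complex.exp (Real.pi * Complex.I / (2 * ℓ))

/-- Defining relations of the restricted quantum group `U_ζ(sl₂)`. -/
inductive Rel (ℓ : ℕ) : FA → FA → Prop
  | KKinv : Rel ℓ (FreeAlgebra.ι ℂ Gen.K * FreeAlgebra.ι ℂ Gen.Kinv) 1
  | KinvK : Rel ℓ (FreeAlgebra.ι ℂ Gen.Kinv * FreeAlgebra.ι ℂ Gen.K) 1
  | KE : Rel ℓ (FreeAlgebra.ι ℂ Gen.K * FreeAlgebra.ι ℂ Gen.E)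
      (tval ℓ • (FreeAlgebra.ι ℂ Gen.E * FreeAlgebra.ι ℂ Gen.K))
  | KF : Rel ℓ (FreeAlgebra.ι ℂ Gen.K * FreeAlgebra.ι ℂ Gen.F)
      ((tval ℓ)⁻¹ • (FreeAlgebra.ι ℂ Gen.F * FreeAlgebra.ι ℂ Gen.K))
  | EF : Rel ℓ
      (FreeAlgebra.ι ℂ Gen.E * FreeAlgebra.ι ℂ Gen.F -
        FreeAlgebra.ι ℂ Gen.F * FreeAlgebra.ι ℂ Gen.E)
      ((tval ℓ - (tval ℓ)⁻¹)⁻¹ • (FreeAlgebra.ι ℂ Gen.K ^ 2 - FreeAlgebra.ι ℂ Gen.Kinv ^ 2))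
  | Epow : Rel ℓ (FreeAlgebra.ι ℂ Gen.E ^ ℓ) 0
  | Fpow : Rel ℓ (FreeAlgebra.ι ℂ Gen.F ^ ℓ) 0
  | Kpow : Rel ℓ (FreeAlgebra.ι ℂ Gen.K ^ (4 * ℓ)) 1

/-- The restricted quantum group `U_ζ(sl₂)`. -/
abbrev Uq (ℓ : ℕ) : Type := RingQuot (Rel ℓ)

def gE (ℓ : ℕ) : Uq ℓ := RingQuot.mkAlgHom ℂ (Rel ℓ) (FreeAlgebra.ι ℂ Gen.E)
def gF (ℓ : ℕ) : Uq ℓ := RingQuot.mkAlgHom ℂ (Rel ℓ) (FreeAlgebra.ι ℂ Gen.F)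
def gK (ℓ : ℕ) : Uq ℓ := RingQuot.mkAlgHom ℂ (Rel ℓ) (FreeAlgebra.ι ℂ Gen.K)
def gKinv (ℓ : ℕ) : Uq ℓ := RingQuot.mkAlgHom ℂ (Rel ℓ) (FreeAlgebra.ι ℂ Gen.Kinv)

/-- The Casimir element `C = FE + (K²t + K⁻²t⁻¹)/(t-t⁻¹)²`. -/
def Cas (ℓ : ℕ) : Uq ℓ :=
  gF ℓ * gE ℓ +
    ((tval ℓ - (tval ℓ)⁻¹) ^ 2)⁻¹ • (tval ℓ • gK ℓ ^ 2 + (tval ℓ)⁻¹ • gKinv ℓ ^ 2)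

/-- Quantum integer `[n]`. -/
def qint (ℓ n : ℕ) : ℂ := (tval ℓ ^ n - (tval ℓ)⁻¹ ^ n) / (tval ℓ - (tval ℓ)⁻¹)

/-- Quantum factorial `[n]!`. -/
def qfact (ℓ n : ℕ) : ℂ := ∏ k ∈ Finset.range n, qint ℓ (k + 1)

/-- The diagonal part `D` of the universal `R`-matrix. -/
def Dmat (ℓ : ℕ) : Uq ℓ ⊗[ℂ] Uq ℓ :=
  ((4 * ℓ : ℂ))⁻¹ • ∑ m ∈ Finset.range (4 * ℓ), ∑ n ∈ Finset.range (4 * ℓ),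
    (sval ℓ ^ (-(m * n : ℤ))) • ((gK ℓ ^ m) ⊗ₜ[ℂ] (gK ℓ ^ n))

/-- The universal `R`-matrix. -/
def Rmat (ℓ : ℕ) : Uq ℓ ⊗[ℂ] Uq ℓ :=
  Dmat ℓ * ∑ n ∈ Finset.range ℓ,
    (((tval ℓ - (tval ℓ)⁻¹) ^ n / qfact ℓ n) * tval ℓ ^ (n * (n - 1) / 2)) •
      ((gE ℓ ^ n) ⊗ₜ[ℂ] (gF ℓ ^ n))

/-- The even subalgebra `U^ev`, generated by `E`, `F`, `K²`, `K⁻²`. -/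
def Uev (ℓ : ℕ) : Subalgebra ℂ (Uq ℓ) :=
  Algebra.adjoin ℂ {gE ℓ, gF ℓ, gK ℓ ^ 2, gKinv ℓ ^ 2}

/-- The image of `U^ev ⊗ U^ev` in `U_ζ ⊗ U_ζ`. -/
def UevT (ℓ : ℕ) : Submodule ℂ (Uq ℓ ⊗[ℂ] Uq ℓ) :=
  LinearMap.range
    (TensorProduct.map (Subalgebra.toSubmodule (Uev ℓ)).subtype
      (Subalgebra.toSubmodule (Uev ℓ)).subtype)

/-- The adjoint action, as a linear map `x ⊗ r ↦ ad_r(x) = Σ r′ x S(r″)`. -/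
def adMap (ℓ : ℕ) (Δ : Uq ℓ →ₐ[ℂ] Uq ℓ ⊗[ℂ] Uq ℓ) (S : Uq ℓ →ₗ[ℂ] Uq ℓ) :
    Uq ℓ ⊗[ℂ] Uq ℓ →ₗ[ℂ] Uq ℓ :=
  LinearMap.mul' ℂ (Uq ℓ) ∘ₗ
    TensorProduct.map LinearMap.id (LinearMap.mul' ℂ (Uq ℓ)) ∘ₗ
    (TensorProduct.leftComm ℂ (Uq ℓ) (Uq ℓ) (Uq ℓ)).toLinearMap ∘ₗ
    TensorProduct.map LinearMap.id (TensorProduct.map LinearMap.id S) ∘ₗ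
    TensorProduct.map LinearMap.id Δ.toLinearMap

/-- `adL y : a ↦ ad_a(y)`, linear in `a`. -/
def adL (ℓ : ℕ) (Δ : Uq ℓ →ₐ[ℂ] Uq ℓ ⊗[ℂ] Uq ℓ) (S : Uq ℓ →ₗ[ℂ] Uq ℓ) (y : Uq ℓ) :
    Uq ℓ →ₗ[ℂ] Uq ℓ :=
  adMap ℓ Δ S ∘ₗ TensorProduct.mk ℂ (Uq ℓ) (Uq ℓ) y

/-! Auxiliary lemmas -/

section Aux
variable (ℓ : ℕ)

lemma gK_mul_gKinv : gK ℓ * gKinv ℓ = 1 := by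
  simpa [gK, gKinv, gE, gF] using RingQuot.mkAlgHom_rel ℂ (Rel.KKinv (ℓ := ℓ))

lemma gKinv_mul_gK : gKinv ℓ * gK ℓ = 1 := by
  simpa [gK, gKinv, gE, gF] using RingQuot.mkAlgHom_rel ℂ (Rel.KinvK (ℓ := ℓ))

lemma gK_mul_gE : gK ℓ * gE ℓ = tval ℓ • (gE ℓ * gK ℓ) := by
  simpa [gK, gKinv, gE, gF] using RingQuot.mkAlgHom_rel ℂ (Rel.KE (ℓ := ℓ))

lemma gK_mul_gF : gK ℓ * gF ℓ = (tval ℓ)⁻¹ • (gF ℓ * gK ℓ) := by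
  simpa [gK, gKinv, gE, gF] using RingQuot.mkAlgHom_rel ℂ (Rel.KF (ℓ := ℓ))

lemma tval_ne_zero : tval ℓ ≠ 0 := Complex.exp_ne_zero _

lemma gK_gKinv_cancel (x : Uq ℓ) : gK ℓ * (gKinv ℓ * x) = x := by
  rw [← mul_assoc, gK_mul_gKinv, one_mul]

lemma gKinv_gK_cancel (x : Uq ℓ) : gKinv ℓ * (gK ℓ * x) = x := by
  rw [← mul_assoc, gKinv_mul_gK, one_mul]

/-- K E K⁻¹ = t E -/
lemma conj_gE : gK ℓ * gE ℓ * gKinv ℓ = tval ℓ • gE ℓ := by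
  rw [gK_mul_gE, smul_mul_assoc, mul_assoc, gK_mul_gKinv, mul_one]

lemma conj_gF : gK ℓ * gF ℓ * gKinv ℓ = (tval ℓ)⁻¹ • gF ℓ := by
  rw [gK_mul_gF, smul_mul_assoc, mul_assoc, gK_mul_gKinv, mul_one]

/-- K⁻¹ E K = t⁻¹ E -/
lemma conjinv_gE : gKinv ℓ * gE ℓ * gK ℓ = (tval ℓ)⁻¹ • gE ℓ := by
  have h : gE ℓ = tval ℓ • (gKinv ℓ * gE ℓ * gK ℓ) := by
    calc gE ℓ = gKinv ℓ * gK ℓ * gE ℓ := by rw [gKinv_mul_gK, one_mul]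
    _ = gKinv ℓ * (gK ℓ * gE ℓ) := by rw [mul_assoc]
    _ = gKinv ℓ * (tval ℓ • (gE ℓ * gK ℓ)) := by rw [gK_mul_gE]
    _ = tval ℓ • (gKinv ℓ * gE ℓ * gK ℓ) := by rw [mul_smul_comm, mul_assoc]
  have h2 : (tval ℓ)⁻¹ • gE ℓ = (tval ℓ)⁻¹ • (tval ℓ • (gKinv ℓ * gE ℓ * gK ℓ)) := by
    rw [← h]
  rw [smul_smul, inv_mul_cancel₀ (tval_ne_zero ℓ), one_smul] at h2
  exact h2.symm

lemma conjinv_gF : gKinv ℓ * gF ℓ * gK ℓ = tval ℓ • gF ℓ := by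
  have h : gF ℓ = (tval ℓ)⁻¹ • (gKinv ℓ * gF ℓ * gK ℓ) := by
    calc gF ℓ = gKinv ℓ * gK ℓ * gF ℓ := by rw [gKinv_mul_gK, one_mul]
    _ = gKinv ℓ * (gK ℓ * gF ℓ) := by rw [mul_assoc]
    _ = gKinv ℓ * ((tval ℓ)⁻¹ • (gF ℓ * gK ℓ)) := by rw [gK_mul_gF]
    _ = (tval ℓ)⁻¹ • (gKinv ℓ * gF ℓ * gK ℓ) := by rw [mul_smul_comm, mul_assoc]
  have h2 : tval ℓ • gF ℓ = tval ℓ • ((tval ℓ)⁻¹ • (gKinv ℓ * gF ℓ * gK ℓ)) := by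
    rw [← h]
  rw [smul_smul, mul_inv_cancel₀ (tval_ne_zero ℓ), one_smul] at h2
  exact h2.symm

lemma gE_mem : gE ℓ ∈ Uev ℓ := Algebra.subset_adjoin (by simp [Set.mem_insert_iff])
lemma gF_mem : gF ℓ ∈ Uev ℓ := Algebra.subset_adjoin (by simp [Set.mem_insert_iff])
lemma gK2_mem : gK ℓ ^ 2 ∈ Uev ℓ := Algebra.subset_adjoin (by simp [Set.mem_insert_iff])
lemma gKinv2_mem : gKinv ℓ ^ 2 ∈ Uev ℓ := Algebra.subset_adjoin (by simp [Set.mem_insert_iff])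

/-- Conjugation by K preserves U^ev. -/
lemma conjK_mem {y : Uq ℓ} (hy : y ∈ Uev ℓ) : gK ℓ * y * gKinv ℓ ∈ Uev ℓ := by
  induction hy using Algebra.adjoin_induction with
  | mem z hz =>
    rcases hz with rfl | rfl | rfl | rfl
    · rw [conj_gE]; exact Subalgebra.smul_mem _ (gE_mem ℓ) _
    · rw [conj_gF]; exact Subalgebra.smul_mem _ (gF_mem ℓ) _
    · have : gK ℓ * gK ℓ ^ 2 * gKinv ℓ = gK ℓ ^ 2 := by
        rw [show gK ℓ * gK ℓ ^ 2 = gK ℓ ^ 2 * gK ℓ by rw [← pow_succ, ← pow_succ'],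
          mul_assoc, gK_mul_gKinv, mul_one]
      rw [this]; exact gK2_mem ℓ
    · have : gK ℓ * gKinv ℓ ^ 2 * gKinv ℓ = gKinv ℓ ^ 2 := by
        simp only [sq, mul_assoc, gK_gKinv_cancel]
      rw [this]; exact gKinv2_mem ℓ
  | algebraMap c =>
    rw [← Algebra.commutes c (gK ℓ), mul_assoc, gK_mul_gKinv, mul_one]
    exact Subalgebra.algebraMap_mem _ _
  | add a b ha hb iha ihb =>
    rw [mul_add, add_mul]; exact add_mem iha ihb
  | mul a b ha hb iha ihb =>
    have : gK ℓ * (a * b) * gKinv ℓ = (gK ℓ * a * gKinv ℓ) * (gK ℓ * b * gKinv ℓ) := by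
      simp only [mul_assoc, gKinv_gK_cancel]
    rw [this]; exact mul_mem iha ihb

/-- Conjugation by K⁻¹ preserves U^ev. -/
lemma conjKinv_mem {y : Uq ℓ} (hy : y ∈ Uev ℓ) : gKinv ℓ * y * gK ℓ ∈ Uev ℓ := by
  induction hy using Algebra.adjoin_induction with
  | mem z hz =>
    rcases hz with rfl | rfl | rfl | rfl
    · rw [conjinv_gE]; exact Subalgebra.smul_mem _ (gE_mem ℓ) _
    · rw [conjinv_gF]; exact Subalgebra.smul_mem _ (gF_mem ℓ) _
    · have : gKinv ℓ * gK ℓ ^ 2 * gK ℓ = gK ℓ ^ 2 := by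
        simp only [sq, mul_assoc, gKinv_gK_cancel]
      rw [this]; exact gK2_mem ℓ
    · have : gKinv ℓ * gKinv ℓ ^ 2 * gK ℓ = gKinv ℓ ^ 2 := by
        rw [show gKinv ℓ * gKinv ℓ ^ 2 = gKinv ℓ ^ 2 * gKinv ℓ by rw [← pow_succ, ← pow_succ'],
          mul_assoc, gKinv_mul_gK, mul_one]
      rw [this]; exact gKinv2_mem ℓ
  | algebraMap c =>
    rw [← Algebra.commutes c (gKinv ℓ), mul_assoc, gKinv_mul_gK, mul_one]
    exact Subalgebra.algebraMap_mem _ _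
  | add a b ha hb iha ihb =>
    rw [mul_add, add_mul]; exact add_mem iha ihb
  | mul a b ha hb iha ihb =>
    have : gKinv ℓ * (a * b) * gK ℓ = (gKinv ℓ * a * gK ℓ) * (gKinv ℓ * b * gK ℓ) := by
      simp only [mul_assoc, gK_gKinv_cancel]
    rw [this]; exact mul_mem iha ihb

/-- The "half-adjoint" bilinear gadget: `gAct S y (a ⊗ b) = a * (y * S b)`. -/
def gAct (S : Uq ℓ →ₗ[ℂ] Uq ℓ) (y : Uq ℓ) : Uq ℓ ⊗[ℂ] Uq ℓ →ₗ[ℂ] Uq ℓ :=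
  LinearMap.mul' ℂ (Uq ℓ) ∘ₗ
    TensorProduct.map LinearMap.id (LinearMap.mulLeft ℂ y ∘ₗ S)

variable (S : Uq ℓ →ₗ[ℂ] Uq ℓ)

@[simp] lemma gAct_tmul (y a b : Uq ℓ) : gAct ℓ S y (a ⊗ₜ[ℂ] b) = a * (y * S b) := by
  simp [gAct]

lemma gAct_add (y y' : Uq ℓ) (z : Uq ℓ ⊗[ℂ] Uq ℓ) :
    gAct ℓ S (y + y') z = gAct ℓ S y z + gAct ℓ S y' z := by
  induction z with
  | zero => simp
  | tmul a b => simp [add_mul, mul_add]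
  | add u v hu hv => simp [map_add, hu, hv]; abel

lemma gAct_zero (z : Uq ℓ ⊗[ℂ] Uq ℓ) : gAct ℓ S 0 z = 0 := by
  induction z with
  | zero => simp
  | tmul a b => simp
  | add u v hu hv => simp [map_add, hu, hv]

lemma gAct_mul (hSmul : ∀ a b : Uq ℓ, S (a * b) = S b * S a) (y : Uq ℓ) :
    ∀ z w : Uq ℓ ⊗[ℂ] Uq ℓ, gAct ℓ S y (z * w) = gAct ℓ S (gAct ℓ S y w) z := by
  intro z
  induction z with
  | zero => intro w; simp [gAct_zero]
  | add z1 z2 h1 h2 => intro w; rw [add_mul, map_add, map_add, h1, h2]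
  | tmul a c =>
    intro w
    induction w with
    | zero => simp [gAct_zero]
    | add w1 w2 hw1 hw2 => rw [mul_add, map_add, map_add, hw1, hw2, gAct_add]
    | tmul b d =>
      rw [Algebra.TensorProduct.tmul_mul_tmul, gAct_tmul, gAct_tmul, gAct_tmul,
        hSmul]
      simp [mul_assoc]

lemma adL_eq (Δ : Uq ℓ →ₐ[ℂ] Uq ℓ ⊗[ℂ] Uq ℓ) (y r : Uq ℓ) :
    adL ℓ Δ S y r = gAct ℓ S y (Δ r) := by
  have key : ∀ z : Uq ℓ ⊗[ℂ] Uq ℓ,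
      (LinearMap.mul' ℂ (Uq ℓ) ∘ₗ
        TensorProduct.map LinearMap.id (LinearMap.mul' ℂ (Uq ℓ)) ∘ₗ
        (TensorProduct.leftComm ℂ (Uq ℓ) (Uq ℓ) (Uq ℓ)).toLinearMap ∘ₗ
        TensorProduct.map LinearMap.id (TensorProduct.map LinearMap.id S))
        (y ⊗ₜ[ℂ] z) = gAct ℓ S y z := by
    intro z
    induction z with
    | zero => rw [TensorProduct.tmul_zero, LinearMap.map_zero, LinearMap.map_zero]
    | tmul a b => simp [TensorProduct.leftComm_tmul]
    | add u v hu hv => rw [TensorProduct.tmul_add, map_add, hu, hv, map_add]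
  have : adL ℓ Δ S y r =
      (LinearMap.mul' ℂ (Uq ℓ) ∘ₗ
        TensorProduct.map LinearMap.id (LinearMap.mul' ℂ (Uq ℓ)) ∘ₗ
        (TensorProduct.leftComm ℂ (Uq ℓ) (Uq ℓ) (Uq ℓ)).toLinearMap ∘ₗ
        TensorProduct.map LinearMap.id (TensorProduct.map LinearMap.id S))
        (y ⊗ₜ[ℂ] (Δ r)) := by
    simp [adL, adMap]
  rw [this, key]

end Aux

section Aux2
variable (ℓ : ℕ)

lemma adjoin_gens_eq_top :
    Algebra.adjoin ℂ ({gE ℓ, gF ℓ, gK ℓ, gKinv ℓ} : Set (Uq ℓ)) = ⊤ := by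
  have himg : (RingQuot.mkAlgHom ℂ (Rel ℓ)) '' (Set.range (FreeAlgebra.ι ℂ (X := Gen)))
      = ({gE ℓ, gF ℓ, gK ℓ, gKinv ℓ} : Set (Uq ℓ)) := by
    ext z
    constructor
    · rintro ⟨_, ⟨g, rfl⟩, rfl⟩
      cases g with
      | E => exact Or.inl rfl
      | F => exact Or.inr (Or.inl rfl)
      | K => exact Or.inr (Or.inr (Or.inl rfl))
      | Kinv => exact Or.inr (Or.inr (Or.inr rfl))
    · rintro (rfl | rfl | rfl | rfl)
      · exact ⟨_, ⟨Gen.E, rfl⟩, rfl⟩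
      · exact ⟨_, ⟨Gen.F, rfl⟩, rfl⟩
      · exact ⟨_, ⟨Gen.K, rfl⟩, rfl⟩
      · exact ⟨_, ⟨Gen.Kinv, rfl⟩, rfl⟩
  rw [← himg, ← AlgHom.map_adjoin, FreeAlgebra.adjoin_range_ι, Algebra.map_top]
  exact (AlgHom.range_eq_top _).mpr (RingQuot.mkAlgHom_surjective ℂ (Rel ℓ))

/-- The adjoint action of any element of `U_ζ` preserves `U^ev`. -/
lemma gAct_Delta_mem (Δ : Uq ℓ →ₐ[ℂ] Uq ℓ ⊗[ℂ] Uq ℓ)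
    (hΔK : Δ (gK ℓ) = gK ℓ ⊗ₜ[ℂ] gK ℓ)
    (hΔKinv : Δ (gKinv ℓ) = gKinv ℓ ⊗ₜ[ℂ] gKinv ℓ)
    (hΔE : Δ (gE ℓ) = 1 ⊗ₜ[ℂ] gE ℓ + gE ℓ ⊗ₜ[ℂ] (gK ℓ ^ 2))
    (hΔF : Δ (gF ℓ) = gF ℓ ⊗ₜ[ℂ] 1 + (gKinv ℓ ^ 2) ⊗ₜ[ℂ] gF ℓ)
    (S : Uq ℓ →ₗ[ℂ] Uq ℓ)
    (hS1 : S 1 = 1) (hSmul : ∀ a b : Uq ℓ, S (a * b) = S b * S a)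
    (hSK : S (gK ℓ) = gKinv ℓ) (hSKinv : S (gKinv ℓ) = gK ℓ)
    (hSE : S (gE ℓ) = -(gE ℓ * gKinv ℓ ^ 2)) (hSF : S (gF ℓ) = -(gK ℓ ^ 2 * gF ℓ))
    (r : Uq ℓ) : ∀ y ∈ Uev ℓ, gAct ℓ S y (Δ r) ∈ Uev ℓ := by
  have hr : r ∈ Algebra.adjoin ℂ ({gE ℓ, gF ℓ, gK ℓ, gKinv ℓ} : Set (Uq ℓ)) := by
    rw [adjoin_gens_eq_top]; trivial
  induction hr using Algebra.adjoin_induction with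
  | mem z hz =>
    intro y hy
    rcases hz with rfl | rfl | rfl | rfl
    · rw [hΔE, map_add, gAct_tmul, gAct_tmul, hSE]
      have hSK2 : S (gK ℓ ^ 2) = gKinv ℓ ^ 2 := by
        rw [sq, hSmul, hSK, ← sq]
      rw [hSK2, one_mul]
      exact add_mem (mul_mem hy (neg_mem (mul_mem (gE_mem ℓ) (gKinv2_mem ℓ))))
        (mul_mem (gE_mem ℓ) (mul_mem hy (gKinv2_mem ℓ)))
    · rw [hΔF, map_add, gAct_tmul, gAct_tmul, hS1, hSF, mul_one]
      exact add_mem (mul_mem (gF_mem ℓ) hy)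
        (mul_mem (gKinv2_mem ℓ) (mul_mem hy (neg_mem (mul_mem (gK2_mem ℓ) (gF_mem ℓ)))))
    · rw [hΔK, gAct_tmul, hSK, ← mul_assoc]
      exact conjK_mem ℓ hy
    · rw [hΔKinv, gAct_tmul, hSKinv, ← mul_assoc]
      exact conjKinv_mem ℓ hy
  | algebraMap c =>
    intro y hy
    rw [AlgHom.commutes, Algebra.TensorProduct.algebraMap_apply, gAct_tmul, hS1, mul_one,
      ← Algebra.smul_def]
    exact Subalgebra.smul_mem _ hy _
  | add a b ha hb iha ihb =>
    intro y hy
    rw [map_add, map_add]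
    exact add_mem (iha y hy) (ihb y hy)
  | mul a b ha hb iha ihb =>
    intro y hy
    rw [map_mul, gAct_mul ℓ S hSmul]
    exact iha _ (ihb y hy)

end Aux2

/-- For `x, y ∈ U^ev`, the element `Σ ad_{S(R₁)}(y) ⊗ ad_{R₂}(x)` of
`U_ζ ⊗ U_ζ` lies in `U^ev ⊗ U^ev`. -/
theorem adSR1_tmul_adR2_mem_Uev (ℓ : ℕ) (hℓ : 1 < ℓ)
    (Δ : Uq ℓ →ₐ[ℂ] Uq ℓ ⊗[ℂ] Uq ℓ)
    (hΔK : Δ (gK ℓ) = gK ℓ ⊗ₜ[ℂ] gK ℓ)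
    (hΔKinv : Δ (gKinv ℓ) = gKinv ℓ ⊗ₜ[ℂ] gKinv ℓ)
    (hΔE : Δ (gE ℓ) = 1 ⊗ₜ[ℂ] gE ℓ + gE ℓ ⊗ₜ[ℂ] (gK ℓ ^ 2))
    (hΔF : Δ (gF ℓ) = gF ℓ ⊗ₜ[ℂ] 1 + (gKinv ℓ ^ 2) ⊗ₜ[ℂ] gF ℓ)
    (S : Uq ℓ →ₗ[ℂ] Uq ℓ)
    (hS1 : S 1 = 1) (hSmul : ∀ a b : Uq ℓ, S (a * b) = S b * S a)
    (hSK : S (gK ℓ) = gKinv ℓ) (hSKinv : S (gKinv ℓ) = gK ℓ)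
    (hSE : S (gE ℓ) = -(gE ℓ * gKinv ℓ ^ 2)) (hSF : S (gF ℓ) = -(gK ℓ ^ 2 * gF ℓ))
    (x y : Uq ℓ) (hx : x ∈ Uev ℓ) (hy : y ∈ Uev ℓ) :
    TensorProduct.map (adL ℓ Δ S y ∘ₗ S) (adL ℓ Δ S x) (Rmat ℓ) ∈ UevT ℓ := by
  have hadS : ∀ r : Uq ℓ, adL ℓ Δ S y (S r) ∈ Uev ℓ := fun r => by
    rw [adL_eq]
    exact gAct_Delta_mem ℓ Δ hΔK hΔKinv hΔE hΔF S hS1 hSmul hSK hSKinv hSE hSF (S r) y hy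
  have hadx : ∀ r : Uq ℓ, adL ℓ Δ S x r ∈ Uev ℓ := fun r => by
    rw [adL_eq]
    exact gAct_Delta_mem ℓ Δ hΔK hΔKinv hΔE hΔF S hS1 hSmul hSK hSKinv hSE hSF r x hx
  suffices h : ∀ z : Uq ℓ ⊗[ℂ] Uq ℓ,
      TensorProduct.map (adL ℓ Δ S y ∘ₗ S) (adL ℓ Δ S x) z ∈ UevT ℓ from h (Rmat ℓ)
  intro z
  induction z with
  | zero => simp [UevT]
  | tmul a b =>
    rw [TensorProduct.map_tmul]
    exact ⟨(⟨_, hadS a⟩ : Uev ℓ) ⊗ₜ[ℂ] (⟨_, hadx b⟩ : Uev ℓ), rfl⟩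
  | add u v hu hv =>
    rw [map_add]
    exact add_mem hu hv


end RestrictedQsl2
end
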